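/- For a down-up alternating permutation σ of [n], the number of alternating inversions satisfies î(σ) ≥ ⌊n²/4⌋, with the minimum ⌊n²/4⌋ attained, and the number of down-up alternating permutations of [n] achieving î(σ) = ⌊n²/4⌋ is the Catalan number c_{⌊n/2⌋}. -/

import Mathlib

open Finset
open scoped Classical

/-- entry of a permutation of `Fin n` at 0-indexed position `i` (0-based values). -/
def ent {n : ℕ} (σ : Equiv.Perm (Fin n)) (i : ℕ) : ℕ :=
  if h : i < n then (σ ⟨i, h⟩ : ℕ) else 0

/-- the triple `(a, b, c)` of distinct values, reduced to a permutation in `S₃`, is odd. -/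
def odd3 (a b c : ℕ) : Prop :=
  ((if b < a then 1 else 0) + (if c < a then 1 else 0) + (if c < b then 1 else 0)) % 2 = 1

instance (a b c : ℕ) : Decidable (odd3 a b c) := by
  unfold odd3; infer_instance

/-- 3-descent set, 0-indexed positions (position `i` here is paper position `i+1`). -/
def D3 {n : ℕ} (σ : Equiv.Perm (Fin n)) : Finset ℕ :=
  (Finset.range (n - 2)).filter (fun i => odd3 (ent σ i) (ent σ (i + 1)) (ent σ (i + 2)))

/-- alternating descent set, 0-indexed positions. -/
def altD {n : ℕ} (σ : Equiv.Perm (Fin n)) : Finset ℕ :=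
  (Finset.range (n - 1)).filter (fun i =>
    (Even i ∧ ent σ (i + 1) < ent σ i) ∨ (¬ Even i ∧ ent σ i < ent σ (i + 1)))

/-- number of up-down alternating permutations of `[n]` (the Euler number `Eₙ`). -/
noncomputable def EulerNum (n : ℕ) : ℕ :=
  ((Finset.univ : Finset (Equiv.Perm (Fin n))).filter (fun τ =>
    ∀ i ∈ Finset.range (n - 1),
      (Even i ∧ ent τ i < ent τ (i + 1)) ∨ (¬ Even i ∧ ent τ (i + 1) < ent τ i))).card

/-- `c³ᵢ(σ)`, 0-indexed: number of `j > i+1` with `σᵢ σᵢ₊₁ σⱼ` odd. -/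
def c3 {n : ℕ} (σ : Equiv.Perm (Fin n)) (i : ℕ) : ℕ :=
  ((Finset.range n).filter (fun j => i + 1 < j ∧ odd3 (ent σ i) (ent σ (i + 1)) (ent σ j))).card

/-- `ĉᵢ(σ)`, 0-indexed. -/
def chat {n : ℕ} (σ : Equiv.Perm (Fin n)) (i : ℕ) : ℕ :=
  ((Finset.range n).filter (fun j => i < j ∧
    ((Even i ∧ ent σ j < ent σ i) ∨ (¬ Even i ∧ ent σ i < ent σ j)))).card

/-- `i₃` of an arbitrary word `f 0, f 1, ..., f (m-1)`. -/
def i3f (m : ℕ) (f : ℕ → ℕ) : ℕ :=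
  ((Finset.range m ×ˢ Finset.range m).filter (fun p =>
    p.1 + 1 < p.2 ∧ odd3 (f p.1) (f (p.1 + 1)) (f p.2))).card

/-- the 3-inversion statistic `i₃`. -/
def i3 {n : ℕ} (σ : Equiv.Perm (Fin n)) : ℕ := i3f n (ent σ)

/-- the word `1*σ` (0-based values): `0, σ₀+1, σ₁+1, ...`. -/
def oneStar {n : ℕ} (σ : Equiv.Perm (Fin n)) : ℕ → ℕ :=
  fun i => if i = 0 then 0 else ent σ (i - 1) + 1

/-- number of alternating inversions `î(σ)`. -/
def altInv {n : ℕ} (σ : Equiv.Perm (Fin n)) : ℕ :=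
  ((Finset.range n ×ˢ Finset.range n).filter (fun p => p.1 < p.2 ∧
    ((Even p.1 ∧ ent σ p.2 < ent σ p.1) ∨ (¬ Even p.1 ∧ ent σ p.1 < ent σ p.2)))).card

/-- number of inversions of the word `f 0, ..., f (m-1)`. -/
def invf (m : ℕ) (f : ℕ → ℕ) : ℕ :=
  ((Finset.range m ×ˢ Finset.range m).filter (fun p => p.1 < p.2 ∧ f p.2 < f p.1)).card

/-- major index of the word `f 0, ..., f (m-1)` (descent at 0-indexed `i` contributes `i+1`). -/
def majf (m : ℕ) (f : ℕ → ℕ) : ℕ :=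
  ∑ i ∈ (Finset.range (m - 1)).filter (fun i => f (i + 1) < f i), (i + 1)

/-- `Â(m, r)`: number of permutations of `[m]` with `r - 1` alternating descents. -/
def Ahat (m r : ℕ) : ℕ :=
  ((Finset.univ : Finset (Equiv.Perm (Fin m))).filter (fun σ => (altD σ).card + 1 = r)).card

/-- down-up alternating: `σ₁ > σ₂ < σ₃ > ⋯`. -/
def DownUp {n : ℕ} (σ : Equiv.Perm (Fin n)) : Prop :=
  ∀ i ∈ Finset.range (n - 1),
    (Even i ∧ ent σ (i + 1) < ent σ i) ∨ (¬ Even i ∧ ent σ i < ent σ (i + 1))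

instance {n : ℕ} (σ : Equiv.Perm (Fin n)) : Decidable (DownUp σ) := by
  unfold DownUp; infer_instance

/-- up-down alternating: `σ₁ < σ₂ > σ₃ < ⋯`. -/
def UpDown {n : ℕ} (σ : Equiv.Perm (Fin n)) : Prop :=
  ∀ i ∈ Finset.range (n - 1),
    (Even i ∧ ent σ i < ent σ (i + 1)) ∨ (¬ Even i ∧ ent σ (i + 1) < ent σ i)

section PartA

variable {n : ℕ}

lemma ent_lt (σ : Equiv.Perm (Fin n)) {i : ℕ} (h : i < n) : ent σ i < n := by
  rw [ent, dif_pos h]; exact (σ ⟨i, h⟩).isLt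

lemma ent_inj (σ : Equiv.Perm (Fin n)) {i j : ℕ} (hi : i < n) (hj : j < n)
    (h : ent σ i = ent σ j) : i = j := by
  rw [ent, dif_pos hi, ent, dif_pos hj] at h
  have := σ.injective (Fin.ext h)
  exact congrArg Fin.val this

/-- the equality condition -/
def Cond {n : ℕ} (σ : Equiv.Perm (Fin n)) : Prop :=
  ∀ k j, 2*k+1 < j → j < n → ¬(ent σ (2*k+1) < ent σ j ∧ ent σ j < ent σ (2*k))

/-- excess at pair k -/
def Ex {n : ℕ} (σ : Equiv.Perm (Fin n)) (k : ℕ) : ℕ :=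
  ((Finset.range n).filter
    (fun j => 2*k+1 < j ∧ ent σ (2*k+1) < ent σ j ∧ ent σ j < ent σ (2*k))).card

lemma altInv_eq_sum_chat (σ : Equiv.Perm (Fin n)) :
    altInv σ = ∑ i ∈ Finset.range n, chat σ i := by
  rw [altInv, Finset.card_filter, Finset.sum_product]
  exact Finset.sum_congr rfl (fun i _ => by rw [chat, Finset.card_filter])

lemma chat_eq_zero (σ : Equiv.Perm (Fin n)) {i : ℕ} (h : n ≤ i + 1) : chat σ i = 0 := by
  rw [chat, Finset.card_eq_zero, Finset.filter_eq_empty_iff]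
  intro j hj
  simp only [Finset.mem_range] at hj
  intro hc
  omega

lemma downup_desc {σ : Equiv.Perm (Fin n)} (hd : DownUp σ) {k : ℕ} (h : 2*k+1 < n) :
    ent σ (2*k+1) < ent σ (2*k) := by
  have := hd (2*k) (Finset.mem_range.mpr (by omega))
  rcases this with ⟨-, h2⟩ | ⟨he, -⟩
  · exact h2
  · exact absurd (even_two_mul k) he

lemma downup_asc {σ : Equiv.Perm (Fin n)} (hd : DownUp σ) {k : ℕ} (h : 2*k+2 < n) :
    ent σ (2*k+1) < ent σ (2*k+2) := by
  have := hd (2*k+1) (Finset.mem_range.mpr (by omega))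
  rcases this with ⟨he, -⟩ | ⟨-, h2⟩
  · exact absurd he (by simp [Nat.even_add_one, even_two_mul k, parity_simps])
  · exact h2

lemma pointwise {σ : Equiv.Perm (Fin n)} (hd : DownUp σ) {k j : ℕ} (h2k : 2*k < n)
    (hj : j < n) :
    (if (2*k < j ∧ ((Even (2*k) ∧ ent σ j < ent σ (2*k)) ∨
        (¬ Even (2*k) ∧ ent σ (2*k) < ent σ j))) then 1 else 0)
    + (if (2*k+1 < j ∧ ((Even (2*k+1) ∧ ent σ j < ent σ (2*k+1)) ∨
        (¬ Even (2*k+1) ∧ ent σ (2*k+1) < ent σ j))) then 1 else 0)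
    = (if 2*k+1 ≤ j then 1 else 0)
    + (if (2*k+1 < j ∧ ent σ (2*k+1) < ent σ j ∧ ent σ j < ent σ (2*k)) then 1 else 0) := by
  have e1 : Even (2*k) := even_two_mul k
  have e2 : ¬ Even (2*k+1) := by simp [Nat.even_add_one, even_two_mul k, parity_simps]
  simp only [e1, e2, true_and, not_true, false_and, not_false_iff, false_or, or_false]
  rcases Nat.lt_trichotomy j (2*k+1) with hlt | heq | hgt
  · split_ifs <;> omega
  · subst heq
    have hvv : ent σ (2*k+1) < ent σ (2*k) := downup_desc hd (by omega)
    split_ifs <;> omega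
  · have h1n : 2*k+1 < n := by omega
    have hvv : ent σ (2*k+1) < ent σ (2*k) := downup_desc hd h1n
    have hne0 : ent σ j ≠ ent σ (2*k) := fun h => by
      have := ent_inj σ hj (by omega) h; omega
    have hne1 : ent σ j ≠ ent σ (2*k+1) := fun h => by
      have := ent_inj σ hj h1n h; omega
    split_ifs <;> omega

lemma pair_sum {σ : Equiv.Perm (Fin n)} (hd : DownUp σ) {k : ℕ} (h : 2*k < n) :
    chat σ (2*k) + chat σ (2*k+1) = (n - (2*k+1)) + Ex σ k := by
  have hc : (n - (2*k+1)) = ∑ j ∈ Finset.range n, (if 2*k+1 ≤ j then 1 else 0) := by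
    rw [← Finset.card_filter]
    have : (Finset.range n).filter (fun j => 2*k+1 ≤ j) = Finset.Ico (2*k+1) n := by
      ext j; simp [Finset.mem_filter, Finset.mem_range, Finset.mem_Ico, and_comm]
    rw [this, Nat.card_Ico]
  rw [chat, chat, Ex, Finset.card_filter, Finset.card_filter, Finset.card_filter, hc,
    ← Finset.sum_add_distrib, ← Finset.sum_add_distrib]
  exact Finset.sum_congr rfl (fun j hj => pointwise hd h (Finset.mem_range.mp hj))

lemma sum_range_two_mul (f : ℕ → ℕ) (K : ℕ) :
    ∑ i ∈ Finset.range (2*K), f i = ∑ k ∈ Finset.range K, (f (2*k) + f (2*k+1)) := by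
  induction K with
  | zero => simp
  | succ K ih =>
    have : 2*(K+1) = (2*K+1)+1 := by ring
    rw [this, Finset.sum_range_succ, Finset.sum_range_succ, Finset.sum_range_succ, ih,
      Nat.add_assoc]

lemma sum_S (n : ℕ) : (∑ k ∈ Finset.range ((n+1)/2), (n - (2*k+1))) = n^2/4 := by
  induction n using Nat.strong_induction_on with
  | _ n ih =>
    match n with
    | 0 => simp
    | 1 => simp
    | (n+2) =>
      have h1 : (n+2+1)/2 = (n+1)/2 + 1 := by omega
      rw [h1, Finset.sum_range_succ']
      have h2 : ∀ k, (n+2 - (2*(k+1)+1)) = n - (2*k+1) := fun k => by omega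
      simp only [h2]
      rw [ih n (by omega)]
      have h3 : (n+2)^2 = n^2 + (n+1)*4 := by ring
      rw [h3, Nat.add_mul_div_right _ _ (by norm_num : (0:ℕ) < 4)]
      omega

theorem altInv_downup {σ : Equiv.Perm (Fin n)} (hd : DownUp σ) :
    altInv σ = n^2/4 + ∑ k ∈ Finset.range ((n+1)/2), Ex σ k := by
  rw [altInv_eq_sum_chat]
  have hsub : ∑ i ∈ Finset.range n, chat σ i = ∑ i ∈ Finset.range (2*((n+1)/2)), chat σ i := by
    apply Finset.sum_subset
    · intro x hx; simp only [Finset.mem_range] at *; omega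
    · intro x _ hx; simp only [Finset.mem_range] at hx
      exact chat_eq_zero σ (by omega)
  rw [hsub, sum_range_two_mul]
  have : ∀ k ∈ Finset.range ((n+1)/2), chat σ (2*k) + chat σ (2*k+1)
      = (n - (2*k+1)) + Ex σ k := by
    intro k hk
    exact pair_sum hd (by simp only [Finset.mem_range] at hk; omega)
  rw [Finset.sum_congr rfl this, Finset.sum_add_distrib, sum_S]

theorem altInv_lower {σ : Equiv.Perm (Fin n)} (hd : DownUp σ) : n^2/4 ≤ altInv σ := by
  rw [altInv_downup hd]; exact Nat.le_add_right _ _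

theorem altInv_min_iff {σ : Equiv.Perm (Fin n)} (hd : DownUp σ) :
    altInv σ = n^2/4 ↔ Cond σ := by
  rw [altInv_downup hd]
  constructor
  · intro h k j hkj hjn
    have hsum : ∑ k ∈ Finset.range ((n+1)/2), Ex σ k = 0 := by omega
    have hk : k ∈ Finset.range ((n+1)/2) := Finset.mem_range.mpr (by omega)
    have : Ex σ k = 0 := by
      have := Finset.sum_eq_zero_iff.mp hsum k hk
      exact this
    rw [Ex, Finset.card_eq_zero, Finset.filter_eq_empty_iff] at this
    intro hc
    exact this (Finset.mem_range.mpr hjn) ⟨hkj, hc⟩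
  · intro hC
    have : ∑ k ∈ Finset.range ((n+1)/2), Ex σ k = 0 := by
      apply Finset.sum_eq_zero
      intro k _
      rw [Ex, Finset.card_eq_zero, Finset.filter_eq_empty_iff]
      intro j hj hc
      exact hC k j hc.1 (Finset.mem_range.mp hj) hc.2
    omega

end PartA
section PartB

variable {n : ℕ}

/-- being a minimal alternating permutation -/
def MinP {n : ℕ} (σ : Equiv.Perm (Fin n)) : Prop := DownUp σ ∧ Cond σ

lemma perm_ext {σ τ : Equiv.Perm (Fin n)} (h : ∀ i < n, ent σ i = ent τ i) : σ = τ := by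
  apply Equiv.ext
  intro x
  have := h x.val x.isLt
  rw [ent, dif_pos x.isLt, ent, dif_pos x.isLt] at this
  exact Fin.ext (by simpa using this)

lemma last_entry {m : ℕ} {σ : Equiv.Perm (Fin (2*m+1))} (hσ : MinP σ) :
    ent σ (2*m) = 2*m := by
  obtain ⟨hd, hc⟩ := hσ
  set i0 : Fin (2*m+1) := σ.symm ⟨2*m, by omega⟩ with hi0
  have hent : ent σ i0.val = 2*m := by
    rw [ent, dif_pos i0.isLt]
    have : σ i0 = ⟨2*m, by omega⟩ := by rw [hi0]; exact σ.apply_symm_apply _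
    rw [Fin.eta, this]
  by_cases hlast : i0.val = 2*m
  · rwa [hlast] at hent
  · exfalso
    have hlt : i0.val < 2*m := by have := i0.isLt; omega
    rcases Nat.even_or_odd i0.val with ⟨k, hk⟩ | ⟨k, hk⟩
    · -- even position 2k with 2k < 2m
      have hk2 : 2*k < 2*m := by omega
      have h1 : ent σ (2*k+1) < ent σ (2*k+2) := downup_asc hd (by omega)
      have h3 : ent σ (2*k) = 2*m := by
        have hik : i0.val = 2*k := by omega
        rwa [hik] at hent
      have h2 : ent σ (2*k+2) < 2*m := by
        have hle : ent σ (2*k+2) < 2*m+1 := ent_lt σ (by omega)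
        have hne : ent σ (2*k+2) ≠ 2*m := by
          intro h
          have := ent_inj σ (i := 2*k+2) (j := 2*k) (by omega) (by omega) (by omega)
          omega
        omega
      exact hc k (2*k+2) (by omega) (by omega) ⟨h1, by omega⟩
    · -- odd position 2k+1, 2k+1 < 2m
      have h1 : ent σ (2*k+1) < ent σ (2*k+2) := downup_asc hd (by omega)
      have h2 : ent σ (2*k+1) = 2*m := by
        have hik : i0.val = 2*k+1 := by omega
        rwa [hik] at hent
      have := ent_lt σ (i := 2*k+2) (by omega)
      omega

/-- restriction of a permutation of [2m+1] fixing the last point -/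
noncomputable def resPerm {m : ℕ} (σ : Equiv.Perm (Fin (2*m+1)))
    (hl : ent σ (2*m) = 2*m) : Equiv.Perm (Fin (2*m)) :=
  Equiv.ofBijective (fun i => (⟨ent σ i.val, by
    have h1 : ent σ i.val < 2*m+1 := ent_lt σ (by omega)
    have h2 : ent σ i.val ≠ 2*m := by
      intro h
      have := ent_inj σ (i := i.val) (j := 2*m) (by omega) (by omega) (by rw [h, hl])
      omega
    omega⟩ : Fin (2*m)))
    (Finite.injective_iff_bijective.mp (by
      intro a b hab
      simp only [Fin.mk.injEq] at hab
      exact Fin.ext (ent_inj σ (by omega) (by omega) hab)))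

lemma ent_resPerm {m : ℕ} (σ : Equiv.Perm (Fin (2*m+1))) (hl : ent σ (2*m) = 2*m)
    {i : ℕ} (h : i < 2*m) : ent (resPerm σ hl) i = ent σ i := by
  rw [ent, dif_pos h, resPerm, Equiv.ofBijective_apply]

/-- extension of a permutation of [2m] by a fixed last point -/
noncomputable def extPerm {m : ℕ} (σ : Equiv.Perm (Fin (2*m))) :
    Equiv.Perm (Fin (2*m+1)) :=
  Equiv.ofBijective (fun i => if h : i.val < 2*m then
      (⟨ent σ i.val, by have := ent_lt σ h; omega⟩ : Fin (2*m+1))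
    else ⟨2*m, by omega⟩)
    (Finite.injective_iff_bijective.mp (by
      intro a b hab
      by_cases ha : a.val < 2*m <;> by_cases hb : b.val < 2*m <;>
        simp only [ha, hb, dif_pos, dif_neg, not_false_iff, Fin.mk.injEq] at hab
      · exact Fin.ext (ent_inj σ ha hb hab)
      · exact absurd hab (by have := ent_lt σ ha; omega)
      · exact absurd hab (by have := ent_lt σ hb; omega)
      · have := a.isLt; have := b.isLt; exact Fin.ext (by omega)))

lemma ent_extPerm {m : ℕ} (σ : Equiv.Perm (Fin (2*m))) {i : ℕ} (h : i < 2*m) :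
    ent (extPerm σ) i = ent σ i := by
  rw [ent, dif_pos (show i < 2*m+1 by omega), extPerm, Equiv.ofBijective_apply]
  simp only [h, dif_pos]

lemma ent_extPerm_last {m : ℕ} (σ : Equiv.Perm (Fin (2*m))) :
    ent (extPerm σ) (2*m) = 2*m := by
  rw [ent, dif_pos (show 2*m < 2*m+1 by omega), extPerm, Equiv.ofBijective_apply]
  simp

lemma minP_resPerm {m : ℕ} {σ : Equiv.Perm (Fin (2*m+1))} (hσ : MinP σ)
    (hl : ent σ (2*m) = 2*m) : MinP (resPerm σ hl) := by
  obtain ⟨hd, hc⟩ := hσ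
  constructor
  · intro i hi
    simp only [Finset.mem_range] at hi
    have h1 : i < 2*m := by omega
    have h2 : i + 1 < 2*m := by omega
    rw [ent_resPerm σ hl h1, ent_resPerm σ hl h2]
    exact hd i (Finset.mem_range.mpr (by omega))
  · intro k j hkj hjn
    rw [ent_resPerm σ hl (by omega), ent_resPerm σ hl (by omega),
      ent_resPerm σ hl (by omega)]
    exact hc k j hkj (by omega)

lemma minP_extPerm {m : ℕ} {σ : Equiv.Perm (Fin (2*m))} (hσ : MinP σ) :
    MinP (extPerm σ) := by
  obtain ⟨hd, hc⟩ := hσ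
  constructor
  · intro i hi
    simp only [Finset.mem_range] at hi
    have h1 : i < 2*m := by omega
    rw [ent_extPerm σ h1]
    by_cases h2 : i + 1 < 2*m
    · rw [ent_extPerm σ h2]
      exact hd i (Finset.mem_range.mpr (by omega))
    · -- i = 2m-1, odd since m ≥ 1
      have hi' : i = 2*m - 1 := by omega
      have hm : 1 ≤ m := by omega
      have hodd : ¬ Even i := by
        rw [hi']
        rcases Nat.even_or_odd (2*m-1) with he | ho
        · exfalso; obtain ⟨t, ht⟩ := he; omega
        · intro h; exact (Nat.not_odd_iff_even.mpr h) ho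
      right
      refine ⟨hodd, ?_⟩
      have : i + 1 = 2*m := by omega
      rw [this, ent_extPerm_last]
      exact ent_lt σ h1
  · intro k j hkj hjn
    by_cases hk : 2*k+1 < 2*m
    · rw [ent_extPerm σ (i := 2*k+1) (by omega), ent_extPerm σ (i := 2*k) (by omega)]
      by_cases hj : j < 2*m
      · rw [ent_extPerm σ hj]
        exact hc k j hkj (by omega)
      · have hj' : j = 2*m := by omega
        rw [hj', ent_extPerm_last]
        have := ent_lt σ (i := 2*k) (by omega)
        omega
    · -- 2k+1 ≥ 2m but 2k+1 < j ≤ 2m forces contradiction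
      intro hcon
      have h1 : j = 2*m := by omega
      have h2 : 2*k+1 = 2*m - 1 := by omega
      rw [h1, ent_extPerm_last] at hcon
      have : 2*k+1 < 2*m := by omega
      omega

lemma card_minP_odd (m : ℕ) :
    ((Finset.univ : Finset (Equiv.Perm (Fin (2*m+1)))).filter MinP).card
    = ((Finset.univ : Finset (Equiv.Perm (Fin (2*m)))).filter MinP).card := by
  apply Finset.card_bij
    (i := fun σ hσ => resPerm σ (last_entry ((Finset.mem_filter.mp hσ).2)))
  · intro σ hσ
    have h := (Finset.mem_filter.mp hσ).2
    simp only [Finset.mem_filter, Finset.mem_univ, true_and]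
    exact minP_resPerm h _
  · intro σ hσ τ hτ hres
    have hσ' := (Finset.mem_filter.mp hσ).2
    have hτ' := (Finset.mem_filter.mp hτ).2
    apply perm_ext
    intro i hi
    by_cases h : i < 2*m
    · have h1 := congrArg (fun ρ => ent ρ i) hres
      rwa [ent_resPerm σ _ h, ent_resPerm τ _ h] at h1
    · have : i = 2*m := by omega
      rw [this, last_entry hσ', last_entry hτ']
  · intro τ hτ
    have hτ' := (Finset.mem_filter.mp hτ).2
    refine ⟨extPerm τ, by
      simp only [Finset.mem_filter, Finset.mem_univ, true_and]
      exact minP_extPerm hτ', ?_⟩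
    apply perm_ext
    intro i hi
    rw [ent_resPerm _ _ hi, ent_extPerm τ hi]

end PartB
section PartC1

open DyckStep

variable {n : ℕ}

/-- position of value v -/
def pos {n : ℕ} (σ : Equiv.Perm (Fin n)) (v : ℕ) : ℕ :=
  if h : v < n then (σ.symm ⟨v, h⟩ : ℕ) else 0

lemma pos_lt (σ : Equiv.Perm (Fin n)) {v : ℕ} (h : v < n) : pos σ v < n := by
  rw [pos, dif_pos h]; exact (σ.symm ⟨v, h⟩).isLt

lemma ent_pos (σ : Equiv.Perm (Fin n)) {v : ℕ} (h : v < n) : ent σ (pos σ v) = v := by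
  rw [pos, dif_pos h, ent, dif_pos (σ.symm ⟨v, h⟩).isLt]
  rw [Fin.eta, Equiv.apply_symm_apply]

lemma pos_ent (σ : Equiv.Perm (Fin n)) {i : ℕ} (h : i < n) : pos σ (ent σ i) = i := by
  have hv : ent σ i < n := ent_lt σ h
  have := ent_pos σ hv
  exact ent_inj σ (pos_lt σ hv) h this

lemma pos_eq_of_ent {σ : Equiv.Perm (Fin n)} {i v : ℕ} (hi : i < n) (h : ent σ i = v) :
    pos σ v = i := by rw [← h, pos_ent σ hi]

/-- the word of peak/valley indicators, ordered by value -/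
def word {n : ℕ} (σ : Equiv.Perm (Fin n)) : List DyckStep :=
  (List.range n).map (fun v => if Odd (pos σ v) then U else D)

lemma word_length (σ : Equiv.Perm (Fin n)) : (word σ).length = n := by
  rw [word, List.length_map, List.length_range]

lemma countP_list_range (p : ℕ → Bool) (k : ℕ) :
    (List.range k).countP p = ((Finset.range k).filter (fun v => p v)).card := by
  induction k with
  | zero => simp
  | succ k ih =>
    rw [List.range_succ, List.countP_append, Finset.range_add_one, Finset.filter_insert]
    by_cases h : p k
    · rw [if_pos h, Finset.card_insert_of_notMem (by simp), ih]
      simp [h]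
    · rw [if_neg h, ih]
      simp [h]

lemma count_word_take_U (σ : Equiv.Perm (Fin n)) {i : ℕ} (hi : i ≤ n) :
    ((word σ).take i).count U
    = ((Finset.range i).filter (fun v => Odd (pos σ v))).card := by
  rw [word, ← List.map_take, List.take_range, min_eq_left hi]
  rw [List.count_eq_countP, List.countP_map]
  rw [show ((fun x => x == U) ∘ fun v => if Odd (pos σ v) then U else D)
      = fun v => decide (Odd (pos σ v)) by
    funext v; by_cases h : Odd (pos σ v) <;> simp [h]]
  rw [countP_list_range]
  congr 1
  apply Finset.filter_congr
  intro v _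
  simp

lemma count_word_take_D (σ : Equiv.Perm (Fin n)) {i : ℕ} (hi : i ≤ n) :
    ((word σ).take i).count D
    = ((Finset.range i).filter (fun v => ¬ Odd (pos σ v))).card := by
  rw [word, ← List.map_take, List.take_range, min_eq_left hi]
  rw [List.count_eq_countP, List.countP_map]
  rw [show ((fun x => x == D) ∘ fun v => if Odd (pos σ v) then U else D)
      = fun v => decide (¬ Odd (pos σ v)) by
    funext v; by_cases h : Odd (pos σ v) <;> simp [h]]
  rw [countP_list_range]
  congr 1
  apply Finset.filter_congr
  intro v _
  simp

/-- transfer cardinalities along the permutation -/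
lemma card_filter_pos (σ : Equiv.Perm (Fin n)) (q : ℕ → Prop) [DecidablePred q] :
    ((Finset.range n).filter (fun v => q (pos σ v))).card
    = ((Finset.range n).filter (fun i => q i)).card := by
  apply Finset.card_bij (i := fun v _ => pos σ v)
  · intro v hv
    simp only [Finset.mem_filter, Finset.mem_range] at *
    exact ⟨pos_lt σ hv.1, hv.2⟩
  · intro v hv w hw hvw
    simp only [Finset.mem_filter, Finset.mem_range] at hv hw
    have := congrArg (ent σ) hvw
    rwa [ent_pos σ hv.1, ent_pos σ hw.1] at this
  · intro i hi
    simp only [Finset.mem_filter, Finset.mem_range] at hi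
    obtain ⟨hi1, hi2⟩ := hi
    exact ⟨ent σ i, by
      simp only [Finset.mem_filter, Finset.mem_range]
      exact ⟨ent_lt σ hi1, by rwa [pos_ent σ hi1]⟩, pos_ent σ hi1⟩

lemma card_odd_lt (m : ℕ) :
    ((Finset.range (2*m)).filter (fun i => Odd i)).card = m := by
  induction m with
  | zero => simp
  | succ m ih =>
    have h2 : 2*(m+1) = (2*m+1)+1 := by ring
    rw [h2, Finset.range_add_one, Finset.filter_insert, if_pos (by exact ⟨m, by omega⟩),
      Finset.card_insert_of_notMem (by simp), Finset.range_add_one, Finset.filter_insert,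
      if_neg (by simp [Nat.odd_iff]), ih]

lemma card_not_odd_lt (m : ℕ) :
    ((Finset.range (2*m)).filter (fun i => ¬ Odd i)).card = m := by
  have := Finset.card_filter_add_card_filter_not
    (s := Finset.range (2*m)) (p := fun i => Odd i)
  rw [Finset.card_range, card_odd_lt] at this
  omega

/-- the prefix-domination property, for down-up permutations of even size -/
lemma prefix_dom {m : ℕ} {σ : Equiv.Perm (Fin (2*m))} (hd : DownUp σ) {i : ℕ}
    (hi : i ≤ 2*m) :
    ((Finset.range i).filter (fun v => ¬ Odd (pos σ v))).card
    ≤ ((Finset.range i).filter (fun v => Odd (pos σ v))).card := by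
  apply Finset.card_le_card_of_injOn (f := fun v => ent σ (pos σ v + 1))
  · intro v hv
    simp only [Finset.mem_coe, Finset.mem_filter, Finset.mem_range] at hv
    obtain ⟨hvi, hve⟩ := hv
    have hvn : v < 2*m := by omega
    have hp : pos σ v < 2*m := pos_lt σ hvn
    have hpe : Even (pos σ v) := Nat.not_odd_iff_even.mp hve
    obtain ⟨k, hk⟩ := hpe
    have hkn : 2*k+1 < 2*m := by omega
    have hdesc : ent σ (2*k+1) < ent σ (2*k) := downup_desc hd hkn
    have hev : ent σ (2*k) = v := by rw [show 2*k = pos σ v by omega, ent_pos σ hvn]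
    simp only [Finset.mem_coe, Finset.mem_filter, Finset.mem_range]
    constructor
    · rw [show pos σ v + 1 = 2*k+1 by omega]; omega
    · rw [show pos σ v + 1 = 2*k+1 by omega, pos_ent σ hkn]
      exact ⟨k, by omega⟩
  · intro v hv w hw hvw
    simp only [Finset.coe_filter, Set.mem_setOf_eq, Finset.mem_range] at hv hw
    have hvn : v < 2*m := by omega
    have hwn : w < 2*m := by omega
    have h1 : pos σ v + 1 < 2*m := by
      have := pos_lt σ hvn
      obtain ⟨k, hk⟩ := Nat.not_odd_iff_even.mp hv.2
      omega
    have h2 : pos σ w + 1 < 2*m := by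
      have := pos_lt σ hwn
      obtain ⟨k, hk⟩ := Nat.not_odd_iff_even.mp hw.2
      omega
    have := ent_inj σ h1 h2 hvw
    have := congrArg (ent σ) (show pos σ v = pos σ w by omega)
    rwa [ent_pos σ hvn, ent_pos σ hwn] at this

/-- the Dyck word of a down-up permutation of even size -/
noncomputable def mkDyck {m : ℕ} (σ : Equiv.Perm (Fin (2*m))) (hd : DownUp σ) : DyckWord where
  toList := word σ
  count_U_eq_count_D := by
    have h1 := count_word_take_U σ (i := 2*m) le_rfl
    have h2 := count_word_take_D σ (i := 2*m) le_rfl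
    rw [List.take_of_length_le (by rw [word_length])] at h1 h2
    rw [h1, h2, card_filter_pos σ (fun i => Odd i), card_filter_pos σ (fun i => ¬ Odd i),
      card_odd_lt, card_not_odd_lt]
  count_D_le_count_U i := by
    rcases le_or_gt i (2*m) with hi | hi
    · rw [count_word_take_U σ hi, count_word_take_D σ hi]
      exact prefix_dom hd hi
    · rw [List.take_of_length_le (by rw [word_length]; omega)]
      have h1 := count_word_take_U σ (i := 2*m) le_rfl
      have h2 := count_word_take_D σ (i := 2*m) le_rfl
      rw [List.take_of_length_le (by rw [word_length])] at h1 h2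
      rw [h1, h2, card_filter_pos σ (fun i => Odd i), card_filter_pos σ (fun i => ¬ Odd i),
        card_odd_lt, card_not_odd_lt]

lemma mkDyck_semilength {m : ℕ} (σ : Equiv.Perm (Fin (2*m))) (hd : DownUp σ) :
    (mkDyck σ hd).semilength = m := by
  rw [DyckWord.semilength]
  show (word σ).count U = m
  have h1 := count_word_take_U σ (i := 2*m) le_rfl
  rw [List.take_of_length_le (by rw [word_length])] at h1
  rw [h1, card_filter_pos σ (fun i => Odd i), card_odd_lt]

end PartC1
section PartC2

open DyckStep

variable {m : ℕ}

lemma peak_mono {σ : Equiv.Perm (Fin (2*m))} (hσ : MinP σ) :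
    ∀ t k, k < t → 2*t < 2*m → ent σ (2*k) < ent σ (2*t) := by
  obtain ⟨hd, hc⟩ := hσ
  intro t
  induction t with
  | zero => omega
  | succ t ih =>
    intro k hk ht
    have hadj : ent σ (2*t) < ent σ (2*(t+1)) := by
      have h1 : ent σ (2*t+1) < ent σ (2*t+2) := downup_asc hd (by omega)
      have h2 := hc t (2*t+2) (by omega) (by omega)
      have hne : ent σ (2*t+2) ≠ ent σ (2*t) := fun h => by
        have := ent_inj σ (i := 2*t+2) (j := 2*t) (by omega) (by omega) h; omega
      have : 2*(t+1) = 2*t+2 := by ring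
      rw [this]
      omega
    rcases Nat.lt_or_ge k t with h | h
    · exact lt_trans (ih k h (by omega)) hadj
    · have : k = t := by omega
      rw [this]; exact hadj

lemma valley_lt_of_later {σ : Equiv.Perm (Fin (2*m))} (hσ : MinP σ) {k t : ℕ}
    (hkt : k < t) (ht : 2*t+1 < 2*m) (hlt : ent σ (2*t+1) < ent σ (2*k)) :
    ent σ (2*t+1) < ent σ (2*k+1) := by
  obtain ⟨hd, hc⟩ := hσ
  have h := hc k (2*t+1) (by omega) (by omega)
  have hne : ent σ (2*t+1) ≠ ent σ (2*k+1) := fun h => by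
    have := ent_inj σ (i := 2*t+1) (j := 2*k+1) (by omega) (by omega) h; omega
  omega

/-- matching parities of positions -/
def SameShape {m : ℕ} (σ τ : Equiv.Perm (Fin (2*m))) : Prop :=
  ∀ v < 2*m, (Odd (pos σ v) ↔ Odd (pos τ v))

lemma rank_peak {σ : Equiv.Perm (Fin (2*m))} (hσ : MinP σ) {k : ℕ} (hk : 2*k < 2*m) :
    ((Finset.range (2*m)).filter
      (fun v => ¬ Odd (pos σ v) ∧ v < ent σ (2*k))).card = k := by
  have himg : (Finset.range (2*m)).filter (fun v => ¬ Odd (pos σ v) ∧ v < ent σ (2*k))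
      = (Finset.range k).image (fun t => ent σ (2*t)) := by
    ext v
    simp only [Finset.mem_filter, Finset.mem_range, Finset.mem_image]
    constructor
    · rintro ⟨hv, hve, hvlt⟩
      obtain ⟨t, htp⟩ := Nat.not_odd_iff_even.mp hve
      have hp : pos σ v < 2*m := pos_lt σ hv
      have hvt : ent σ (2*t) = v := by rw [show 2*t = pos σ v by omega, ent_pos σ hv]
      refine ⟨t, ?_, hvt⟩
      by_contra hge
      have hge' : k ≤ t := by omega
      rcases Nat.eq_or_lt_of_le hge' with heq | hlt
      · subst heq; omega
      · have := peak_mono hσ t k hlt (by omega)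
        omega
    · rintro ⟨t, htk, hvt⟩
      subst hvt
      refine ⟨ent_lt σ (by omega), ?_, peak_mono hσ k t htk hk⟩
      rw [pos_ent σ (by omega)]
      simp [Nat.odd_iff]
  rw [himg, Finset.card_image_of_injOn, Finset.card_range]
  intro a ha b hb hab
  simp only [Finset.coe_range, Set.mem_Iio] at ha hb
  have := ent_inj σ (i := 2*a) (j := 2*b) (by omega) (by omega) hab
  omega

lemma even_entries_eq {σ τ : Equiv.Perm (Fin (2*m))} (hσ : MinP σ) (hτ : MinP τ)
    (hw : SameShape σ τ) {k : ℕ} (hk : 2*k < 2*m) : ent σ (2*k) = ent τ (2*k) := by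
  have hfilter : ∀ c : ℕ, (Finset.range (2*m)).filter (fun v => ¬ Odd (pos σ v) ∧ v < c)
      = (Finset.range (2*m)).filter (fun v => ¬ Odd (pos τ v) ∧ v < c) := by
    intro c
    apply Finset.filter_congr
    intro v hv
    simp only [Finset.mem_range] at hv
    rw [hw v hv]
  by_contra hne
  -- wlog via cases
  rcases Nat.lt_or_ge (ent σ (2*k)) (ent τ (2*k)) with hlt | hge
  · have h1 := rank_peak hσ hk
    have h2 := rank_peak hτ hk
    rw [← hfilter] at h2
    have hsub : insert (ent σ (2*k))
        ((Finset.range (2*m)).filter (fun v => ¬ Odd (pos σ v) ∧ v < ent σ (2*k)))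
        ⊆ (Finset.range (2*m)).filter (fun v => ¬ Odd (pos σ v) ∧ v < ent τ (2*k)) := by
      intro v hv
      rcases Finset.mem_insert.mp hv with hv | hv
      · subst hv
        simp only [Finset.mem_filter, Finset.mem_range]
        refine ⟨ent_lt σ hk, ?_, hlt⟩
        rw [pos_ent σ hk]; simp [Nat.odd_iff]
      · simp only [Finset.mem_filter, Finset.mem_range] at hv ⊢
        exact ⟨hv.1, hv.2.1, by omega⟩
    have hcard := Finset.card_le_card hsub
    rw [Finset.card_insert_of_notMem (by
      simp only [Finset.mem_filter, Finset.mem_range]; intro h; omega), h1, h2] at hcard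
    omega
  · have hlt : ent τ (2*k) < ent σ (2*k) := by omega
    have h1 := rank_peak hσ hk
    have h2 := rank_peak hτ hk
    rw [← hfilter] at h2
    have hsub : insert (ent τ (2*k))
        ((Finset.range (2*m)).filter (fun v => ¬ Odd (pos σ v) ∧ v < ent τ (2*k)))
        ⊆ (Finset.range (2*m)).filter (fun v => ¬ Odd (pos σ v) ∧ v < ent σ (2*k)) := by
      intro v hv
      rcases Finset.mem_insert.mp hv with hv | hv
      · subst hv
        simp only [Finset.mem_filter, Finset.mem_range]
        refine ⟨ent_lt τ hk, ?_, hlt⟩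
        rw [hw _ (ent_lt τ hk), pos_ent τ hk]
        simp [Nat.odd_iff]
      · simp only [Finset.mem_filter, Finset.mem_range] at hv ⊢
        exact ⟨hv.1, hv.2.1, by omega⟩
    have hcard := Finset.card_le_card hsub
    rw [Finset.card_insert_of_notMem (by
      simp only [Finset.mem_filter, Finset.mem_range]; intro h; omega), h1, h2] at hcard
    omega

/-- the valley set used to pin down odd entries -/
lemma valley_max {σ : Equiv.Perm (Fin (2*m))} (hσ : MinP σ) {k v : ℕ} (hk : 2*k+1 < 2*m)
    (hv : v < 2*m) (hvo : Odd (pos σ v)) (hnot : ∀ t < k, ent σ (2*t+1) ≠ v)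
    (hlt : v < ent σ (2*k)) : v ≤ ent σ (2*k+1) := by
  obtain ⟨t, htp⟩ := hvo
  have hvp : pos σ v < 2*m := pos_lt σ hv
  have hvt : ent σ (2*t+1) = v := by rw [show 2*t+1 = pos σ v by omega, ent_pos σ hv]
  have htk : k ≤ t := by
    by_contra h
    exact hnot t (by omega) hvt
  rcases Nat.eq_or_lt_of_le htk with heq | hlt2
  · subst heq; omega
  · have := valley_lt_of_later hσ hlt2 (by omega) (by omega)
    omega

lemma odd_entries_eq {σ τ : Equiv.Perm (Fin (2*m))} (hσ : MinP σ) (hτ : MinP τ)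
    (hw : SameShape σ τ) : ∀ k, 2*k+1 < 2*m → ent σ (2*k+1) = ent τ (2*k+1) := by
  intro k
  induction k using Nat.strong_induction_on with
  | _ k ih =>
    intro hk
    have heven := even_entries_eq hσ hτ hw (k := k) (by omega)
    -- σ's odd entry is ≤ τ's and vice versa
    have hσv : ent σ (2*k+1) < ent σ (2*k) := downup_desc hσ.1 hk
    have hτv : ent τ (2*k+1) < ent τ (2*k) := downup_desc hτ.1 hk
    have h1 : ent σ (2*k+1) ≤ ent τ (2*k+1) := by
      apply valley_max hτ hk (ent_lt σ (by omega))
      · rw [← hw _ (ent_lt σ (by omega)), pos_ent σ (by omega)]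
        exact ⟨k, by omega⟩
      · intro t htk habs
        have := ih t htk (by omega)
        have := ent_inj σ (i := 2*t+1) (j := 2*k+1) (by omega) (by omega) (by omega)
        omega
      · omega
    have h2 : ent τ (2*k+1) ≤ ent σ (2*k+1) := by
      apply valley_max hσ hk (ent_lt τ (by omega))
      · rw [hw _ (ent_lt τ (by omega)), pos_ent τ (by omega)]
        exact ⟨k, by omega⟩
      · intro t htk habs
        have := ih t htk (by omega)
        have := ent_inj τ (i := 2*t+1) (j := 2*k+1) (by omega) (by omega) (by omega)
        omega
      · omega
    omega

lemma word_injective {σ τ : Equiv.Perm (Fin (2*m))} (hσ : MinP σ) (hτ : MinP τ)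
    (hw : word σ = word τ) : σ = τ := by
  have hshape : SameShape σ τ := by
    intro v hv
    have h1 := List.getElem_of_eq hw (show v < (word σ).length by rw [word_length]; omega)
    simp only [word, List.getElem_map, List.getElem_range] at h1
    by_cases hσo : Odd (pos σ v) <;> by_cases hτo : Odd (pos τ v) <;>
      simp [hσo, hτo] at h1 ⊢
  apply perm_ext
  intro i hi
  rcases Nat.even_or_odd i with ⟨k, hk⟩ | ⟨k, hk⟩
  · rw [show i = 2*k by omega]
    exact even_entries_eq hσ hτ hshape (by omega)
  · rw [show i = 2*k+1 by omega]
    exact odd_entries_eq hσ hτ hshape k (by omega)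

end PartC2
section PartC3

open DyckStep

variable {a b : ℕ}

/-- the glued word: block of σ₁ (values shifted by 1), peak 2a+1, valley 0, block of σ₂ -/
def fglue (σ₁ : Equiv.Perm (Fin (2*a))) (σ₂ : Equiv.Perm (Fin (2*b))) (i : ℕ) : ℕ :=
  if i < 2*a then ent σ₁ i + 1 else if i = 2*a then 2*a+1 else if i = 2*a+1 then 0
  else ent σ₂ (i - (2*a+2)) + (2*a+2)

lemma fglue_b1 (σ₁ : Equiv.Perm (Fin (2*a))) (σ₂ : Equiv.Perm (Fin (2*b))) {i : ℕ}
    (h : i < 2*a) : fglue σ₁ σ₂ i = ent σ₁ i + 1 := if_pos h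

lemma fglue_peak (σ₁ : Equiv.Perm (Fin (2*a))) (σ₂ : Equiv.Perm (Fin (2*b))) :
    fglue σ₁ σ₂ (2*a) = 2*a+1 := by rw [fglue, if_neg (by omega), if_pos rfl]

lemma fglue_valley (σ₁ : Equiv.Perm (Fin (2*a))) (σ₂ : Equiv.Perm (Fin (2*b))) :
    fglue σ₁ σ₂ (2*a+1) = 0 := by
  rw [fglue, if_neg (by omega), if_neg (by omega), if_pos rfl]

lemma fglue_b2 (σ₁ : Equiv.Perm (Fin (2*a))) (σ₂ : Equiv.Perm (Fin (2*b))) {i : ℕ}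
    (h : 2*a+2 ≤ i) : fglue σ₁ σ₂ i = ent σ₂ (i - (2*a+2)) + (2*a+2) := by
  rw [fglue, if_neg (by omega), if_neg (by omega), if_neg (by omega)]

lemma fglue_lt (σ₁ : Equiv.Perm (Fin (2*a))) (σ₂ : Equiv.Perm (Fin (2*b))) {i : ℕ}
    (h : i < 2*(a+b+1)) : fglue σ₁ σ₂ i < 2*(a+b+1) := by
  rcases (show i < 2*a ∨ i = 2*a ∨ i = 2*a+1 ∨ (2*a+2 ≤ i) by omega) with h1 | h1 | h1 | h1
  · rw [fglue_b1 _ _ h1]; have := ent_lt σ₁ h1; omega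
  · rw [h1, fglue_peak]; omega
  · rw [h1, fglue_valley]; omega
  · rw [fglue_b2 _ _ h1]
    have : i - (2*a+2) < 2*b := by omega
    have := ent_lt σ₂ this
    omega

lemma fglue_inj (σ₁ : Equiv.Perm (Fin (2*a))) (σ₂ : Equiv.Perm (Fin (2*b))) {i j : ℕ}
    (hi : i < 2*(a+b+1)) (hj : j < 2*(a+b+1)) (h : fglue σ₁ σ₂ i = fglue σ₁ σ₂ j) :
    i = j := by
  rcases (show i < 2*a ∨ i = 2*a ∨ i = 2*a+1 ∨ (2*a+2 ≤ i) by omega) with h1 | h1 | h1 | h1 <;>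
    rcases (show j < 2*a ∨ j = 2*a ∨ j = 2*a+1 ∨ (2*a+2 ≤ j) by omega) with h2 | h2 | h2 | h2
  · rw [fglue_b1 _ _ h1, fglue_b1 _ _ h2] at h
    exact ent_inj σ₁ h1 h2 (by omega)
  · rw [fglue_b1 _ _ h1, h2, fglue_peak] at h; have := ent_lt σ₁ h1; omega
  · rw [fglue_b1 _ _ h1, h2, fglue_valley] at h; omega
  · rw [fglue_b1 _ _ h1, fglue_b2 _ _ h2] at h; have := ent_lt σ₁ h1; omega
  · rw [h1, fglue_peak, fglue_b1 _ _ h2] at h; have := ent_lt σ₁ h2; omega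
  · omega
  · rw [h1, h2, fglue_peak, fglue_valley] at h; omega
  · rw [h1, fglue_peak, fglue_b2 _ _ h2] at h; omega
  · rw [h1, fglue_valley, fglue_b1 _ _ h2] at h; omega
  · rw [h1, h2, fglue_valley, fglue_peak] at h; omega
  · omega
  · rw [h1, fglue_valley, fglue_b2 _ _ h2] at h; omega
  · rw [fglue_b2 _ _ h1, fglue_b1 _ _ h2] at h; have := ent_lt σ₁ h2; omega
  · rw [fglue_b2 _ _ h1, h2, fglue_peak] at h; omega
  · rw [fglue_b2 _ _ h1, h2, fglue_valley] at h; omega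
  · rw [fglue_b2 _ _ h1, fglue_b2 _ _ h2] at h
    have e := ent_inj σ₂ (i := i - (2*a+2)) (j := j - (2*a+2))
      (by omega) (by omega) (by omega)
    omega

/-- gluing permutations, realizing the Dyck word `U w₁ D w₂` -/
noncomputable def gluePerm (σ₁ : Equiv.Perm (Fin (2*a))) (σ₂ : Equiv.Perm (Fin (2*b))) :
    Equiv.Perm (Fin (2*(a+b+1))) :=
  Equiv.ofBijective (fun i => ⟨fglue σ₁ σ₂ i.val, fglue_lt σ₁ σ₂ i.isLt⟩)
    (Finite.injective_iff_bijective.mp (by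
      intro x y hxy
      simp only [Fin.mk.injEq] at hxy
      exact Fin.ext (fglue_inj σ₁ σ₂ x.isLt y.isLt hxy)))

lemma ent_gluePerm (σ₁ : Equiv.Perm (Fin (2*a))) (σ₂ : Equiv.Perm (Fin (2*b))) {i : ℕ}
    (h : i < 2*(a+b+1)) : ent (gluePerm σ₁ σ₂) i = fglue σ₁ σ₂ i := by
  rw [ent, dif_pos h, gluePerm, Equiv.ofBijective_apply]

lemma downUp_glue {σ₁ : Equiv.Perm (Fin (2*a))} {σ₂ : Equiv.Perm (Fin (2*b))}
    (h1 : DownUp σ₁) (h2 : DownUp σ₂) : DownUp (gluePerm σ₁ σ₂) := by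
  intro i hi
  simp only [Finset.mem_range] at hi
  have hn : i < 2*(a+b+1) - 1 := hi
  rw [ent_gluePerm σ₁ σ₂ (i := i) (by omega), ent_gluePerm σ₁ σ₂ (i := i+1) (by omega)]
  rcases (show (i + 1 < 2*a) ∨ (a ≥ 1 ∧ i = 2*a-1) ∨ i = 2*a ∨ (b ≥ 1 ∧ i = 2*a+1)
      ∨ (2*a+2 ≤ i) by omega) with h | ⟨ha, h⟩ | h | ⟨hb, h⟩ | h
  · rw [fglue_b1 σ₁ σ₂ (i := i+1) h, fglue_b1 σ₁ σ₂ (i := i) (by omega)]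
    rcases h1 i (Finset.mem_range.mpr (by omega)) with ⟨he, hlt⟩ | ⟨he, hlt⟩
    · exact Or.inl ⟨he, by omega⟩
    · exact Or.inr ⟨he, by omega⟩
  · have hi1 : i + 1 = 2*a := by omega
    rw [hi1, fglue_peak, fglue_b1 σ₁ σ₂ (i := i) (by omega)]
    refine Or.inr ⟨?_, ?_⟩
    · rw [Nat.even_iff]; omega
    · have := ent_lt σ₁ (i := i) (by omega); omega
  · subst h
    rw [fglue_peak, show 2*a+1 = 2*a+1 from rfl, fglue_valley]
    exact Or.inl ⟨by rw [Nat.even_iff]; omega, by omega⟩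
  · obtain ⟨hb, h⟩ := And.intro hb h
    subst h
    rw [fglue_valley, show 2*a+1+1 = 2*a+2 by omega, fglue_b2 _ _ (by omega)]
    exact Or.inr ⟨by rw [Nat.even_iff]; omega, by omega⟩
  · have hu : i - (2*a+2) + 1 = i + 1 - (2*a+2) := by omega
    rw [fglue_b2 _ _ h, fglue_b2 _ _ (by omega)]
    set u := i - (2*a+2) with hu2
    have hub : u < 2*b - 1 := by omega
    have hpar : (Even i ↔ Even u) := by rw [Nat.even_iff, Nat.even_iff]; omega
    have hup : i + 1 - (2*a+2) = u + 1 := by omega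
    rw [hup]
    rcases h2 u (Finset.mem_range.mpr hub) with ⟨he, hlt⟩ | ⟨he, hlt⟩
    · exact Or.inl ⟨hpar.mpr he, by omega⟩
    · exact Or.inr ⟨fun hcon => he (hpar.mp hcon), by omega⟩

lemma cond_glue {σ₁ : Equiv.Perm (Fin (2*a))} {σ₂ : Equiv.Perm (Fin (2*b))}
    (hm1 : MinP σ₁) (hm2 : MinP σ₂) : Cond (gluePerm σ₁ σ₂) := by
  intro k j hkj hjn
  rw [ent_gluePerm σ₁ σ₂ (i := 2*k+1) (by omega), ent_gluePerm σ₁ σ₂ (i := j) (by omega),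
    ent_gluePerm σ₁ σ₂ (i := 2*k) (by omega)]
  rcases (show k < a ∨ k = a ∨ a < k by omega) with hk | hk | hk
  · rw [fglue_b1 _ _ (show 2*k+1 < 2*a by omega), fglue_b1 _ _ (show 2*k < 2*a by omega)]
    rcases (show j < 2*a ∨ j = 2*a ∨ j = 2*a+1 ∨ (2*a+2 ≤ j) by omega) with h | h | h | h
    · rw [fglue_b1 _ _ h]
      intro ⟨c1, c2⟩
      exact hm1.2 k j hkj (by omega) ⟨by omega, by omega⟩
    · rw [h, fglue_peak]
      have := ent_lt σ₁ (i := 2*k) (by omega)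
      omega
    · rw [h, fglue_valley]; omega
    · rw [fglue_b2 _ _ h]
      have := ent_lt σ₁ (i := 2*k) (by omega)
      omega
  · rw [show (2*k : ℕ) = 2*a by omega, fglue_peak, fglue_valley,
      fglue_b2 _ _ (show 2*a+2 ≤ j by omega)]
    omega
  · have hk2 : 2*a+2 ≤ 2*k := by omega
    rw [fglue_b2 _ _ (by omega), fglue_b2 _ _ hk2, fglue_b2 _ _ (show 2*a+2 ≤ j by omega)]
    set k' := k - (a+1) with hk'
    have e1 : 2*k+1 - (2*a+2) = 2*k'+1 := by omega
    have e2 : 2*k - (2*a+2) = 2*k' := by omega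
    rw [e1, e2]
    set w := j - (2*a+2) with hw
    intro ⟨c1, c2⟩
    exact hm2.2 k' w (by omega) (by omega) ⟨by omega, by omega⟩

lemma word_getElem {n : ℕ} (σ : Equiv.Perm (Fin n)) {v : ℕ} (h : v < (word σ).length) :
    (word σ)[v] = if Odd (pos σ v) then U else D := by
  simp only [word, List.getElem_map, List.getElem_range]

lemma word_glue {σ₁ : Equiv.Perm (Fin (2*a))} {σ₂ : Equiv.Perm (Fin (2*b))} :
    word (gluePerm σ₁ σ₂) = U :: (word σ₁ ++ D :: word σ₂) := by
  apply List.ext_getElem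
  · rw [word_length, List.length_cons, List.length_append, word_length,
      List.length_cons, word_length]
    omega
  · intro v hv1 hv2
    have hv : v < 2*(a+b+1) := by rwa [word_length] at hv1
    rw [word_getElem _ hv1]
    rcases (show v = 0 ∨ (1 ≤ v ∧ v ≤ 2*a) ∨ v = 2*a+1 ∨ (2*a+2 ≤ v) by omega)
        with h | ⟨h1, h2⟩ | h | h
    · subst h
      have hp : pos (gluePerm σ₁ σ₂) 0 = 2*a+1 := by
        apply pos_eq_of_ent (by omega)
        rw [ent_gluePerm σ₁ σ₂ (by omega), fglue_valley]
      rw [hp, if_pos ⟨a, by omega⟩]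
      rfl
    · -- v = u+1 with u < 2a
      obtain ⟨u, rfl⟩ : ∃ u, v = u + 1 := ⟨v - 1, by omega⟩
      have hu2 : u < 2*a := by omega
      have hpu : pos σ₁ u < 2*a := pos_lt σ₁ hu2
      have hp : pos (gluePerm σ₁ σ₂) (u+1) = pos σ₁ u := by
        apply pos_eq_of_ent (by omega)
        rw [ent_gluePerm σ₁ σ₂ (by omega), fglue_b1 _ _ hpu, ent_pos σ₁ hu2]
      rw [hp, List.getElem_cons_succ,
        List.getElem_append_left (by rw [word_length]; omega),
        word_getElem σ₁ (by rw [word_length]; omega)]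
    · subst h
      have hp : pos (gluePerm σ₁ σ₂) (2*a+1) = 2*a := by
        apply pos_eq_of_ent (by omega)
        rw [ent_gluePerm σ₁ σ₂ (by omega), fglue_peak]
      rw [hp, if_neg (by simp [Nat.odd_iff]), List.getElem_cons_succ,
        List.getElem_append_right (by rw [word_length])]
      simp only [word_length, Nat.sub_self, List.getElem_cons_zero]
    · obtain ⟨u, rfl⟩ : ∃ u, v = u + 1 := ⟨v - 1, by omega⟩
      have hu : 2*a+1 ≤ u := by omega
      obtain ⟨w, hw⟩ : ∃ w, u - 2*a = w + 1 := ⟨u - 2*a - 1, by omega⟩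
      have hw2 : w < 2*b := by omega
      have hpw : pos σ₂ w < 2*b := pos_lt σ₂ hw2
      have hp : pos (gluePerm σ₁ σ₂) (u+1) = 2*a+2 + pos σ₂ w := by
        apply pos_eq_of_ent (by omega)
        rw [ent_gluePerm σ₁ σ₂ (by omega), fglue_b2 _ _ (by omega),
          show 2*a+2 + pos σ₂ w - (2*a+2) = pos σ₂ w by omega, ent_pos σ₂ hw2]
        omega
      rw [hp, List.getElem_cons_succ,
        List.getElem_append_right (by rw [word_length]; omega)]
      simp only [word_length, hw, List.getElem_cons_succ]
      rw [word_getElem σ₂ (by rw [word_length]; omega)]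
      have hpar : (Odd (2*a+2 + pos σ₂ w) ↔ Odd (pos σ₂ w)) := by
        rw [Nat.odd_iff, Nat.odd_iff]; omega
      by_cases ho : Odd (pos σ₂ w)
      · rw [if_pos (hpar.mpr ho), if_pos ho]
      · rw [if_neg (fun hcon => ho (hpar.mp hcon)), if_neg ho]

lemma exists_minP : ∀ M : ℕ, ∀ p : DyckWord, p.semilength = M →
    ∃ σ : Equiv.Perm (Fin (2*M)), MinP σ ∧ word σ = p.toList := by
  intro M
  induction M using Nat.strong_induction_on with
  | _ M ih =>
    intro p hp
    by_cases h0 : p = 0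
    · subst h0
      have hM : M = 0 := by simpa using hp.symm
      subst hM
      refine ⟨Equiv.refl _, ⟨?_, ?_⟩, ?_⟩
      · intro i hi; simp at hi
      · intro k j h1 h2; omega
      · rfl
    · have hdecomp := DyckWord.nest_insidePart_add_outsidePart h0
      have hsemi := DyckWord.semilength_insidePart_add_semilength_outsidePart_add_one h0
      set q := p.insidePart with hq
      set r := p.outsidePart with hr
      set a := q.semilength with ha'
      set b := r.semilength with hb'
      have ha : a < M := by omega
      have hb : b < M := by omega
      obtain ⟨σ₁, hσ₁, hw₁⟩ := ih a ha q rfl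
      obtain ⟨σ₂, hσ₂, hw₂⟩ := ih b hb r rfl
      have hM : M = a + b + 1 := by omega
      subst hM
      refine ⟨gluePerm σ₁ σ₂, ⟨downUp_glue hσ₁.1 hσ₂.1, cond_glue hσ₁ hσ₂⟩, ?_⟩
      rw [word_glue, hw₁, hw₂, ← hdecomp]
      show _ = (q.nest.toList) ++ r.toList
      show _ = ([U] ++ q.toList ++ [D]) ++ r.toList
      simp

lemma card_minP_even (m : ℕ) :
    ((Finset.univ : Finset (Equiv.Perm (Fin (2*m)))).filter MinP).card = catalan m := by
  rw [← DyckWord.card_dyckWord_semilength_eq_catalan, ← Finset.card_univ]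
  apply Finset.card_bij (i := fun σ hσ =>
    (⟨mkDyck σ ((Finset.mem_filter.mp hσ).2).1,
      mkDyck_semilength σ _⟩ : {p : DyckWord // p.semilength = m}))
  · intro σ hσ; exact Finset.mem_univ _
  · intro σ hσ τ hτ heq
    have h1 := (Finset.mem_filter.mp hσ).2
    have h2 := (Finset.mem_filter.mp hτ).2
    apply word_injective h1 h2
    have := congrArg (fun x => (x : {p : DyckWord // p.semilength = m}).val.toList) heq
    exact this
  · rintro ⟨p, hp⟩ -
    obtain ⟨σ, hσ, hw⟩ := exists_minP m p hp
    refine ⟨σ, Finset.mem_filter.mpr ⟨Finset.mem_univ _, hσ⟩, ?_⟩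
    apply Subtype.ext
    apply DyckWord.ext
    exact hw

end PartC3

theorem stmt16 (n : ℕ) :
    (∀ σ : Equiv.Perm (Fin n), DownUp σ → n ^ 2 / 4 ≤ altInv σ) ∧
    (∃ σ : Equiv.Perm (Fin n), DownUp σ ∧ altInv σ = n ^ 2 / 4) ∧
    ((Finset.univ : Finset (Equiv.Perm (Fin n))).filter
        (fun σ => DownUp σ ∧ altInv σ = n ^ 2 / 4)).card = catalan (n / 2) := by
  have hiff : ∀ σ : Equiv.Perm (Fin n), (DownUp σ ∧ altInv σ = n ^ 2 / 4) ↔ MinP σ := by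
    intro σ
    constructor
    · rintro ⟨hd, he⟩; exact ⟨hd, (altInv_min_iff hd).mp he⟩
    · rintro ⟨hd, hc⟩; exact ⟨hd, (altInv_min_iff hd).mpr hc⟩
  have hcard : ((Finset.univ : Finset (Equiv.Perm (Fin n))).filter
      (fun σ => DownUp σ ∧ altInv σ = n ^ 2 / 4)).card = catalan (n / 2) := by
    have heq : ((Finset.univ : Finset (Equiv.Perm (Fin n))).filter
        (fun σ => DownUp σ ∧ altInv σ = n ^ 2 / 4))
        = (Finset.univ : Finset (Equiv.Perm (Fin n))).filter MinP :=
      Finset.filter_congr (fun σ _ => by rw [hiff σ])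
    rw [heq]
    rcases Nat.even_or_odd n with ⟨m, hm⟩ | ⟨m, hm⟩
    · have hn : n = 2*m := by omega
      subst hn
      rw [card_minP_even m]
      congr 1
      omega
    · have hn : n = 2*m+1 := by omega
      subst hn
      rw [card_minP_odd m, card_minP_even m]
      congr 1
      omega
  refine ⟨fun σ hd => altInv_lower hd, ?_, hcard⟩
  have hpos : 0 < ((Finset.univ : Finset (Equiv.Perm (Fin n))).filter
      (fun σ => DownUp σ ∧ altInv σ = n ^ 2 / 4)).card := by
    rw [hcard]
    have h1 := succ_mul_catalan_eq_centralBinom (n / 2)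
    have h2 := Nat.centralBinom_pos (n / 2)
    rcases Nat.eq_zero_or_pos (catalan (n / 2)) with hz | hp
    · rw [hz, Nat.mul_zero] at h1; omega
    · exact hp
  obtain ⟨σ, hσ⟩ := Finset.card_pos.mp hpos
  exact ⟨σ, (Finset.mem_filter.mp hσ).2⟩
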